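/- (Jones splitting) Let B be a collection of dyadic intervals with finite Carleson constant ⟦B⟧, and let A be the largest integer less than 4⟦B⟧. Then B can be decomposed into pairwise disjoint subcollections B_1, ..., B_A such that ⟦B_i⟧ ≤ 4 for each i ≤ A. -/

import Mathlib

open MeasureTheory

/-- A dyadic interval `[k/2^n, (k+1)/2^n)` of `[0,1)`. -/
structure DI where
  n : ℕ
  k : ℕ
  hk : k < 2 ^ n

namespace DI

/-- The underlying set of a dyadic interval. -/
def carrier (I : DI) : Set ℝ := Set.Ico ((I.k : ℝ) / 2 ^ I.n) ((I.k + 1 : ℝ) / 2 ^ I.n)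

/-- The length `|I| = 2^{-n}` of a dyadic interval. -/
noncomputable def len (I : DI) : ENNReal := ENNReal.ofReal ((2 : ℝ)⁻¹ ^ I.n)

end DI

/-- The Carleson sum `∑_{I ∈ L, I ⊆ J} |I|`. -/
noncomputable def carlesonSum (L : Set DI) (J : DI) : ENNReal :=
  ∑' I : {I : DI // I ∈ L ∧ I.carrier ⊆ J.carrier}, I.1.len

/-- `L` satisfies the `M`-Carleson condition. -/
def CarlesonLE (L : Set DI) (M : ENNReal) : Prop :=
  ∀ J : DI, carlesonSum L J ≤ M * J.len

/-- The Carleson constant `⟦L⟧ = sup_J (1/|J|) ∑_{I ∈ L, I ⊆ J} |I|`. -/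
noncomputable def carlesonConst (L : Set DI) : ENNReal :=
  ⨆ J : DI, carlesonSum L J / J.len

/-- The square of the dyadic BMO norm of `x = ∑ x_I h_I`,
`‖x‖² = sup_J (1/|J|) ∑_{I ⊆ J} x_I² |I|`, in terms of the Haar coefficients. -/
noncomputable def bmoSq (x : DI → ℝ) : ENNReal :=
  ⨆ J : DI, (∑' I : {I : DI // I.carrier ⊆ J.carrier},
      ENNReal.ofReal ((x I.1) ^ 2) * I.1.len) / J.len

/-- `|L*|`: the Lebesgue measure of the set covered by the collection `L`. -/
noncomputable def covMeas (L : Set DI) : ENNReal := volume (⋃ I ∈ L, I.carrier)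

/-- `y` is the coefficient function of `Tx` where `T h_I = h_{τ(I)}` and `x` has
coefficients `x_I`. -/
def HaarCompat (τ : DI → DI) (x y : DI → ℝ) : Prop :=
  (∀ I, y (τ I) = x I) ∧ ∀ J, J ∉ Set.range τ → y J = 0

/-- The maximal elements of a collection of dyadic intervals, under inclusion. -/
def maxSet (S : Set DI) : Set DI :=
  {I | I ∈ S ∧ ∀ K ∈ S, I.carrier ⊆ K.carrier → I = K}

namespace JonesAux
open DI

lemma DI.ext' {I J : DI} (hn : I.n = J.n) (hk : I.k = J.k) : I = J := by
  cases I; cases J; simp_all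

lemma lb_lt_ub (I : DI) : (I.k : ℝ) / 2 ^ I.n < (I.k + 1 : ℝ) / 2 ^ I.n := by
  have h : (0:ℝ) < 2 ^ I.n := by positivity
  exact (div_lt_div_iff_of_pos_right h).2 (by linarith)

lemma carrier_nonempty (I : DI) : I.carrier.Nonempty :=
  Set.nonempty_Ico.2 (lb_lt_ub I)

lemma len_eq_volume (I : DI) : I.len = volume I.carrier := by
  rw [DI.carrier, Real.volume_Ico, DI.len]
  congr 1
  have h : (0:ℝ) < 2 ^ I.n := by positivity
  field_simp
  rw [← mul_pow]; norm_num

lemma len_ne_zero (I : DI) : I.len ≠ 0 := by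
  simp only [DI.len, ne_eq, ENNReal.ofReal_eq_zero, not_le]
  positivity

lemma len_ne_top (I : DI) : I.len ≠ ⊤ := ENNReal.ofReal_ne_top

lemma subset_iff {I J : DI} : I.carrier ⊆ J.carrier ↔
    (J.k : ℝ) / 2 ^ J.n ≤ (I.k : ℝ) / 2 ^ I.n ∧ (I.k + 1 : ℝ) / 2 ^ I.n ≤ (J.k + 1 : ℝ) / 2 ^ J.n := by
  rw [DI.carrier, DI.carrier, Set.Ico_subset_Ico_iff (lb_lt_ub I)]

lemma carrier_injective : Function.Injective DI.carrier := by
  intro I J h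
  rw [DI.carrier, DI.carrier, Set.Ico_eq_Ico_iff (Or.inl (lb_lt_ub I))] at h
  obtain ⟨h1, h2⟩ := h
  have hIn : (0:ℝ) < 2 ^ I.n := by positivity
  have hJn : (0:ℝ) < 2 ^ J.n := by positivity
  have h1' := h1
  field_simp at h1 h2
  have hpow : (2:ℝ) ^ I.n = 2 ^ J.n := by linarith
  have hn : I.n = J.n := (pow_right_strictMono₀ (by norm_num : (1:ℝ) < 2)).injective hpow
  have hk : I.k = J.k := by
    rw [hpow] at h1'
    field_simp at h1'
    exact_mod_cast h1'
  exact DI.ext' hn hk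

lemma subset_of_le_of_not_disjoint {I J : DI} (hn : J.n ≤ I.n)
    (h : ¬ Disjoint I.carrier J.carrier) : I.carrier ⊆ J.carrier := by
  obtain ⟨x, hx1, hx2⟩ := Set.not_disjoint_iff.1 h
  obtain ⟨hx1a, hx1b⟩ := hx1
  obtain ⟨hx2a, hx2b⟩ := hx2
  set d := I.n - J.n with hd
  have hpow : (2:ℝ) ^ I.n = 2 ^ J.n * 2 ^ d := by
    rw [← pow_add]
    congr 1
    omega
  have hJp : (0:ℝ) < 2 ^ J.n := by positivity
  have hIp : (0:ℝ) < 2 ^ I.n := by positivity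
  have c1 : J.k * 2 ^ d ≤ I.k := by
    have hr : (J.k:ℝ) / 2 ^ J.n < (I.k + 1) / 2 ^ I.n := lt_of_le_of_lt hx2a hx1b
    rw [div_lt_div_iff₀ hJp hIp, hpow] at hr
    have : ((J.k * 2 ^ d : ℕ) : ℝ) < ((I.k + 1 : ℕ) : ℝ) := by push_cast; nlinarith
    have := Nat.cast_lt.1 this
    omega
  have c2 : I.k + 1 ≤ (J.k + 1) * 2 ^ d := by
    have hr : (I.k:ℝ) / 2 ^ I.n < (J.k + 1) / 2 ^ J.n := lt_of_le_of_lt hx1a hx2b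
    rw [div_lt_div_iff₀ hIp hJp, hpow] at hr
    have : ((I.k : ℕ) : ℝ) < (((J.k + 1) * 2 ^ d : ℕ) : ℝ) := by push_cast; nlinarith
    have := Nat.cast_lt.1 this
    omega
  rw [subset_iff]
  constructor
  · rw [div_le_div_iff₀ hJp hIp, hpow]
    have : ((J.k * 2 ^ d : ℕ) : ℝ) ≤ ((I.k : ℕ) : ℝ) := Nat.cast_le.2 c1
    push_cast at this
    nlinarith
  · rw [div_le_div_iff₀ hIp hJp, hpow]
    have : ((I.k + 1 : ℕ) : ℝ) ≤ (((J.k + 1) * 2 ^ d : ℕ) : ℝ) := Nat.cast_le.2 c2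
    push_cast at this
    nlinarith

lemma dichotomy (I J : DI) (h : ¬ Disjoint I.carrier J.carrier) :
    I.carrier ⊆ J.carrier ∨ J.carrier ⊆ I.carrier := by
  rcases le_total J.n I.n with hn | hn
  · exact Or.inl (subset_of_le_of_not_disjoint hn h)
  · exact Or.inr (subset_of_le_of_not_disjoint hn fun hdisj => h hdisj.symm)

lemma nested_of_carrier_subset_ne {I J : DI} (h : I.carrier ⊆ J.carrier) (hne : I ≠ J) :
    I.carrier ⊂ J.carrier :=
  HasSubset.Subset.ssubset_of_ne h (fun hc => hne (carrier_injective hc))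

lemma n_le_of_subset {I J : DI} (h : I.carrier ⊆ J.carrier) : J.n ≤ I.n := by
  rw [subset_iff] at h
  by_contra hc
  push_neg at hc
  have h2 : (2:ℝ) ^ I.n < 2 ^ J.n := by
    exact pow_lt_pow_right₀ (by norm_num) hc
  have hIp : (0:ℝ) < 2 ^ I.n := by positivity
  have hJp : (0:ℝ) < 2 ^ J.n := by positivity
  obtain ⟨ha, hb⟩ := h
  rw [div_le_div_iff₀ hJp hIp] at ha
  rw [div_le_div_iff₀ hIp hJp] at hb
  nlinarith

/-- The set of dyadic ancestors of `I` is finite. -/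
lemma finite_ancestors (I : DI) : {K : DI | I.carrier ⊆ K.carrier}.Finite := by
  have hinj : Function.Injective (fun K : DI => (K.n, K.k)) := by
    intro K L h
    simp only [Prod.mk.injEq] at h
    exact DI.ext' h.1 h.2
  have hfin : (Set.Iic I.n ×ˢ Set.Iio (2 ^ I.n)).Finite :=
    (Set.finite_Iic _).prod (Set.finite_Iio _)
  apply Set.Finite.subset (hfin.preimage hinj.injOn)
  intro K hK
  simp only [Set.mem_preimage, Set.mem_prod, Set.mem_Iic, Set.mem_Iio]
  have hn := n_le_of_subset hK
  exact ⟨hn, lt_of_lt_of_le K.hk (Nat.pow_le_pow_right (by norm_num) hn)⟩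

instance : Countable DI := by
  have hinj : Function.Injective (fun K : DI => (K.n, K.k)) := by
    intro K L h
    simp only [Prod.mk.injEq] at h
    exact DI.ext' h.1 h.2
  exact hinj.countable

/-- The generation of `I`: number of strict ancestors of `I` inside `B`. -/
noncomputable def gen (B : Set DI) (I : DI) : ℕ := {K | K ∈ B ∧ I.carrier ⊂ K.carrier}.ncard

lemma finite_strict_ancestors (B : Set DI) (I : DI) :
    {K | K ∈ B ∧ I.carrier ⊂ K.carrier}.Finite :=
  (finite_ancestors I).subset fun K hK => hK.2.1

lemma gen_lt {B : Set DI} {I K : DI} (hK : K ∈ B) (h : I.carrier ⊂ K.carrier) :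
    gen B K < gen B I := by
  have hsub : insert K {L | L ∈ B ∧ K.carrier ⊂ L.carrier} ⊆ {L | L ∈ B ∧ I.carrier ⊂ L.carrier} := by
    intro L hL
    rcases hL with rfl | hL
    · exact ⟨hK, h⟩
    · exact ⟨hL.1, h.trans hL.2⟩
  have hnot : K ∉ {L | L ∈ B ∧ K.carrier ⊂ L.carrier} := fun hc => (ssubset_irrefl _) hc.2
  have h1 := Set.ncard_insert_of_notMem hnot (finite_strict_ancestors B K)
  have h2 := Set.ncard_le_ncard hsub (finite_strict_ancestors B I)
  rw [h1] at h2
  unfold gen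
  omega

/-- Every interval of `B` strictly below `t` inside `t` has an immediate ancestor in `B`
which is still inside `t`. -/
lemma exists_parent {B : Set DI} {t K : DI} (ht : t ∈ B) (hK : K ∈ B)
    (hsub : K.carrier ⊆ t.carrier) (hgen : gen B t < gen B K) :
    ∃ I' , I' ∈ B ∧ gen B K = gen B I' + 1 ∧ K.carrier ⊂ I'.carrier ∧ I'.carrier ⊆ t.carrier := by
  set SA := {L | L ∈ B ∧ K.carrier ⊂ L.carrier} with hSA
  have htK : K ≠ t := fun hc => by rw [hc] at hgen; omega
  have htSA : t ∈ SA := ⟨ht, nested_of_carrier_subset_ne hsub htK⟩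
  have hfin : SA.Finite := finite_strict_ancestors B K
  obtain ⟨I', hI'SA, hmin⟩ :=
    Set.Finite.exists_minimalFor DI.carrier SA hfin ⟨t, htSA⟩
  have hminsub : ∀ L ∈ SA, I'.carrier ⊆ L.carrier := by
    intro L hL
    have hnd : ¬ Disjoint L.carrier I'.carrier := by
      obtain ⟨x, hx⟩ := carrier_nonempty K
      exact Set.not_disjoint_iff.2 ⟨x, hL.2.subset hx, hI'SA.2.subset hx⟩
    rcases dichotomy L I' hnd with hc | hc
    · exact hmin hL hc
    · exact hc
  refine ⟨I', hI'SA.1, ?_, hI'SA.2, hminsub t htSA⟩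
  have hset : SA = insert I' {L | L ∈ B ∧ I'.carrier ⊂ L.carrier} := by
    ext L
    constructor
    · intro hL
      rcases eq_or_ne L I' with rfl | hne
      · exact Set.mem_insert _ _
      · refine Set.mem_insert_of_mem _ ⟨hL.1, ?_⟩
        exact nested_of_carrier_subset_ne (hminsub L hL) (fun hc => hne hc.symm)
    · intro hL
      rcases hL with rfl | hL
      · exact hI'SA
      · exact ⟨hL.1, hI'SA.2.trans hL.2⟩
  have hnot : I' ∉ {L | L ∈ B ∧ I'.carrier ⊂ L.carrier} := fun hc => (ssubset_irrefl _) hc.2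
  rw [gen, hSA] at *
  rw [hset, Set.ncard_insert_of_notMem hnot (finite_strict_ancestors B I')]
  rfl

/-- Sum of lengths of pairwise disjoint intervals inside `U` is at most `volume U`. -/
lemma tsum_len_le_volume {s : Set DI}
    (hdisj : ∀ K ∈ s, ∀ L ∈ s, K ≠ L → Disjoint K.carrier L.carrier)
    {U : Set ℝ} (hU : ∀ K ∈ s, K.carrier ⊆ U) :
    ∑' K : s, (K : DI).len ≤ volume U := by
  have h1 : ∑' K : s, (K : DI).len = ∑' K : s, volume (K : DI).carrier := by
    congr 1
    ext K
    exact len_eq_volume _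
  rw [h1]
  have hmeas : ∀ K : s, MeasurableSet (K : DI).carrier := fun _ => measurableSet_Ico
  have hpd : Pairwise (Function.onFun Disjoint fun K : s => (K : DI).carrier) := by
    intro K L hne
    exact hdisj K K.2 L L.2 (fun hc => hne (Subtype.ext hc))
  rw [← measure_iUnion hpd hmeas]
  apply measure_mono
  exact Set.iUnion_subset fun K => hU K K.2

lemma carlesonSum_eq_indicator (L : Set DI) (J : DI) :
    carlesonSum L J = ∑' I : DI, Set.indicator {I | I ∈ L ∧ I.carrier ⊆ J.carrier} DI.len I := by
  rw [carlesonSum, ← tsum_subtype]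
  rfl

lemma gen_disjoint {B : Set DI} {m : ℕ} :
    ∀ K ∈ {K | K ∈ B ∧ gen B K = m}, ∀ L ∈ {K | K ∈ B ∧ gen B K = m}, K ≠ L →
      Disjoint K.carrier L.carrier := by
  intro K hK L hL hne
  obtain ⟨hK1, hK2⟩ := hK
  obtain ⟨hL1, hL2⟩ := hL
  by_contra hnd
  rcases dichotomy K L hnd with hc | hc
  · have := gen_lt hL1 (nested_of_carrier_subset_ne hc hne)
    omega
  · have := gen_lt hK1 (nested_of_carrier_subset_ne hc (Ne.symm hne))
    omega

/-- Key per-top estimate. -/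
lemma perTop {B : Set DI} {A : ℕ} (hA0 : A ≠ 0)
    (hCle : ∀ J : DI, carlesonSum B J ≤ (3 * A : ℕ) * J.len)
    {j : ℕ} {t : DI} (ht : t ∈ B) (hjt : gen B t % A = j) :
    ∑' I : DI, Set.indicator {I | (I ∈ B ∧ gen B I % A = j) ∧ I.carrier ⊆ t.carrier} DI.len I
      ≤ 4 * t.len := by
  set g := gen B t with hg
  set Gm : ℕ → Set DI := fun m => {K | K ∈ B ∧ gen B K = g + m ∧ K.carrier ⊆ t.carrier}
    with hGm
  set s : ℕ → ENNReal := fun m => ∑' I : DI, Set.indicator (Gm m) DI.len I with hs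
  -- (a) s is antitone
  have santi : Antitone s := by
    apply antitone_nat_of_succ_le
    intro m
    have h1 : s (m + 1) = ∑' K : ↥(Gm (m+1)), (K : DI).len := (tsum_subtype _ _).symm
    have h2 : s m = ∑' K : ↥(Gm m), (K : DI).len := (tsum_subtype _ _).symm
    rw [h1, h2]
    have hb : ∑' K : ↥(Gm (m+1)), (K : DI).len ≤ volume (⋃ K : ↥(Gm m), (K : DI).carrier) := by
      apply tsum_len_le_volume
      · intro K hK L hL hne
        exact gen_disjoint K ⟨hK.1, hK.2.1⟩ L ⟨hL.1, hL.2.1⟩ hne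
      · intro K hK
        have hKgen : gen B K = g + (m + 1) := hK.2.1
        have hgenK : gen B t < gen B K := by omega
        obtain ⟨I', hI'B, hgenI', hKI', hI't⟩ := exists_parent ht hK.1 hK.2.2 hgenK
        have hI'm : I' ∈ Gm m := ⟨hI'B, by omega, hI't⟩
        exact hKI'.subset.trans (Set.subset_iUnion (fun K : ↥(Gm m) => (K : DI).carrier) ⟨I', hI'm⟩)
    refine hb.trans ?_
    refine (measure_iUnion_le _).trans ?_
    apply le_of_eq
    congr 1
    ext K
    exact (len_eq_volume _).symm
  -- (b) grouping
  have hgroup : (A : ENNReal) * ∑' r : ℕ, s ((r + 1) * A) ≤ ∑' m : ℕ, s (m + 1) := by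
    rw [← ENNReal.tsum_mul_left]
    have step1 : ∀ r : ℕ, (A : ENNReal) * s ((r + 1) * A) = ∑ i : Fin A, s ((r + 1) * A) := by
      intro r
      rw [Finset.sum_const, Finset.card_univ, Fintype.card_fin, nsmul_eq_mul]
    calc ∑' r : ℕ, (A : ENNReal) * s ((r + 1) * A)
        = ∑' r : ℕ, ∑ i : Fin A, s ((r + 1) * A) := by
          exact tsum_congr step1
      _ ≤ ∑' r : ℕ, ∑ i : Fin A, s (r * A + (i : ℕ) + 1) := by
          apply Summable.tsum_le_tsum _ ENNReal.summable ENNReal.summable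
          intro r
          apply Finset.sum_le_sum
          intro i _
          apply santi
          have := i.2
          have hA1 : 1 ≤ A := Nat.one_le_iff_ne_zero.2 hA0
          nlinarith [i.2]
      _ = ∑' r : ℕ, ∑' i : Fin A, s (r * A + (i : ℕ) + 1) := by
          exact tsum_congr fun r => (tsum_fintype _).symm
      _ = ∑' p : ℕ × Fin A, s (p.1 * A + (p.2 : ℕ) + 1) := ENNReal.tsum_prod.symm
      _ ≤ ∑' m : ℕ, s (m + 1) := by
          have hinj : Function.Injective (fun p : ℕ × Fin A => p.1 * A + (p.2 : ℕ)) := by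
            intro p q hpq
            simp only at hpq
            have h1 := p.2.2
            have h2 := q.2.2
            have hfst : p.1 = q.1 := by
              rcases Nat.lt_trichotomy p.1 q.1 with h | h | h
              · nlinarith
              · exact h
              · nlinarith
            refine Prod.ext hfst (Fin.ext ?_)
            rw [hfst] at hpq
            omega
          exact ENNReal.tsum_comp_le_tsum_of_injective hinj fun m => s (m + 1)
  -- (c) tail sum bounded by the full Carleson sum
  have hD : ∑' m : ℕ, s (m + 1) ≤ carlesonSum B t := by
    rw [carlesonSum_eq_indicator]
    have hswap : ∑' m : ℕ, s (m + 1)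
        = ∑' I : DI, ∑' m : ℕ, Set.indicator (Gm (m+1)) DI.len I := ENNReal.tsum_comm
    rw [hswap]
    apply Summable.tsum_le_tsum _ ENNReal.summable ENNReal.summable
    intro I
    by_cases hI : I ∈ B ∧ I.carrier ⊆ t.carrier ∧ g < gen B I
    · have h0 : ∀ m : ℕ, m ≠ gen B I - g - 1 → Set.indicator (Gm (m+1)) DI.len I = 0 := by
        intro m hm
        apply Set.indicator_of_notMem
        intro hmem
        exact hm (by have := hmem.2.1; omega)
      rw [tsum_eq_single (gen B I - g - 1) h0]
      calc Set.indicator (Gm (gen B I - g - 1 + 1)) DI.len I ≤ DI.len I :=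
            Set.indicator_le_self' (fun _ _ => zero_le) I
        _ = Set.indicator {I | I ∈ B ∧ I.carrier ⊆ t.carrier} DI.len I := by
            rw [Set.indicator_of_mem (Set.mem_setOf.mpr ⟨hI.1, hI.2.1⟩)]
    · have h0 : ∀ m : ℕ, Set.indicator (Gm (m+1)) DI.len I = 0 := by
        intro m
        apply Set.indicator_of_notMem
        intro hmem
        exact hI ⟨hmem.1, hmem.2.2, by have := hmem.2.1; omega⟩
      simp only [h0, tsum_zero]
      exact zero_le
  -- combine (b), (c), Carleson bound to get the tail estimate
  have htail : ∑' r : ℕ, s ((r + 1) * A) ≤ 3 * t.len := by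
    have h1 : (A : ENNReal) * ∑' r : ℕ, s ((r + 1) * A) ≤ (A : ENNReal) * (3 * t.len) := by
      refine (hgroup.trans hD).trans ((hCle t).trans (le_of_eq ?_))
      push_cast
      ring
    exact (ENNReal.mul_le_mul_iff_right (by exact_mod_cast hA0) (ENNReal.natCast_ne_top A)).1 h1
  -- (e) pointwise decomposition and conclusion
  have hpt : ∀ I : DI,
      Set.indicator {I | (I ∈ B ∧ gen B I % A = j) ∧ I.carrier ⊆ t.carrier} DI.len I
        ≤ Set.indicator {t} DI.len I + ∑' r : ℕ, Set.indicator (Gm ((r + 1) * A)) DI.len I := by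
    intro I
    by_cases hI : I ∈ {I | (I ∈ B ∧ gen B I % A = j) ∧ I.carrier ⊆ t.carrier}
    · rw [Set.indicator_of_mem hI]
      rcases eq_or_ne I t with rfl | hne
      · rw [Set.indicator_of_mem (Set.mem_singleton I)]
        exact le_add_right (le_refl _)
      · have hlt : g < gen B I :=
          gen_lt ht (nested_of_carrier_subset_ne hI.2 hne)
        have hmod : gen B I % A = g % A := by rw [hI.1.2, hjt]
        have hdvd : A ∣ gen B I - g := (Nat.modEq_iff_dvd' hlt.le).1 hmod.symm
        obtain ⟨q, hq⟩ := hdvd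
        have hq0 : q ≠ 0 := by rintro rfl; omega
        have hr : gen B I = g + (q - 1 + 1) * A := by
          have hq2 : q - 1 + 1 = q := by omega
          rw [hq2, mul_comm, ← hq]
          omega
        have hImem : I ∈ Gm ((q - 1 + 1) * A) := by
          simp only [hGm, Set.mem_setOf_eq]
          exact ⟨hI.1.1, hr, hI.2⟩
        have := ENNReal.le_tsum (f := fun r : ℕ => Set.indicator (Gm ((r + 1) * A)) DI.len I)
          (q - 1)
        rw [Set.indicator_of_mem hImem] at this
        exact le_add_left this
    · rw [Set.indicator_of_notMem hI]
      exact zero_le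
  calc ∑' I : DI, Set.indicator {I | (I ∈ B ∧ gen B I % A = j) ∧ I.carrier ⊆ t.carrier} DI.len I
      ≤ ∑' I : DI, (Set.indicator {t} DI.len I
          + ∑' r : ℕ, Set.indicator (Gm ((r + 1) * A)) DI.len I) :=
        Summable.tsum_le_tsum hpt ENNReal.summable ENNReal.summable
    _ = (∑' I : DI, Set.indicator {t} DI.len I)
          + ∑' I : DI, ∑' r : ℕ, Set.indicator (Gm ((r + 1) * A)) DI.len I := ENNReal.tsum_add
    _ = t.len + ∑' r : ℕ, s ((r + 1) * A) := by
        congr 1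
        · rw [← tsum_subtype]
          exact tsum_singleton t DI.len
        · exact ENNReal.tsum_comm
    _ ≤ t.len + 3 * t.len := add_le_add_right htail _
    _ = 4 * t.len := by ring

lemma exists_top {S : Set DI} {I : DI} (hI : I ∈ S) : ∃ t ∈ maxSet S, I.carrier ⊆ t.carrier := by
  have hfin : {K | K ∈ S ∧ I.carrier ⊆ K.carrier}.Finite :=
    (finite_ancestors I).subset fun K hK => hK.2
  obtain ⟨t, htm, hmax⟩ :=
    Set.Finite.exists_maximalFor DI.carrier _ hfin ⟨I, hI, subset_rfl⟩
  refine ⟨t, ⟨htm.1, ?_⟩, htm.2⟩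
  intro K hK hsub
  exact carrier_injective (le_antisymm hsub (hmax ⟨hK, htm.2.trans hsub⟩ hsub))

lemma maxSet_pairwise_disjoint {S : Set DI} :
    ∀ t ∈ maxSet S, ∀ t' ∈ maxSet S, t ≠ t' → Disjoint t.carrier t'.carrier := by
  intro t ht t' ht' hne
  by_contra hnd
  rcases dichotomy t t' hnd with hc | hc
  · exact hne (ht.2 t' ht'.1 hc)
  · exact hne (ht'.2 t ht.1 hc).symm

/-- The main estimate: each congruence class of the generation is `4`-Carleson. -/
lemma classBound {B : Set DI} {A : ℕ} (hA0 : A ≠ 0)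
    (hCle : ∀ J : DI, carlesonSum B J ≤ (3 * A : ℕ) * J.len) (j : ℕ) (J : DI) :
    carlesonSum {I | I ∈ B ∧ gen B I % A = j} J ≤ 4 * J.len := by
  set S := {I | (I ∈ B ∧ gen B I % A = j) ∧ I.carrier ⊆ J.carrier} with hS
  set T := maxSet S with hT
  have hsum : carlesonSum {I | I ∈ B ∧ gen B I % A = j} J
      = ∑' I : DI, Set.indicator S DI.len I := by
    rw [carlesonSum_eq_indicator]
    rfl
  rw [hsum]
  have hpt : ∀ I : DI, Set.indicator S DI.len I
      ≤ ∑' t : ↥T, Set.indicator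
          {K | (K ∈ B ∧ gen B K % A = j) ∧ K.carrier ⊆ (t : DI).carrier} DI.len I := by
    intro I
    by_cases hI : I ∈ S
    · obtain ⟨t₀, ht₀, hIt₀⟩ := exists_top hI
      have hmem : I ∈ {K | (K ∈ B ∧ gen B K % A = j) ∧ K.carrier ⊆ (t₀ : DI).carrier} :=
        ⟨hI.1, hIt₀⟩
      have hterm := ENNReal.le_tsum (f := fun t : ↥T => Set.indicator
          {K | (K ∈ B ∧ gen B K % A = j) ∧ K.carrier ⊆ (t : DI).carrier} DI.len I) ⟨t₀, ht₀⟩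
      rw [Set.indicator_of_mem hmem] at hterm
      rw [Set.indicator_of_mem hI]
      exact hterm
    · rw [Set.indicator_of_notMem hI]
      exact zero_le
  calc ∑' I : DI, Set.indicator S DI.len I
      ≤ ∑' I : DI, ∑' t : ↥T, Set.indicator
          {K | (K ∈ B ∧ gen B K % A = j) ∧ K.carrier ⊆ (t : DI).carrier} DI.len I :=
        Summable.tsum_le_tsum hpt ENNReal.summable ENNReal.summable
    _ = ∑' t : ↥T, ∑' I : DI, Set.indicator
          {K | (K ∈ B ∧ gen B K % A = j) ∧ K.carrier ⊆ (t : DI).carrier} DI.len I :=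
        ENNReal.tsum_comm
    _ ≤ ∑' t : ↥T, 4 * (t : DI).len := by
        apply Summable.tsum_le_tsum _ ENNReal.summable ENNReal.summable
        intro t
        exact perTop hA0 hCle t.2.1.1.1 t.2.1.1.2
    _ = 4 * ∑' t : ↥T, (t : DI).len := ENNReal.tsum_mul_left
    _ ≤ 4 * J.len := by
        apply mul_le_mul_right
        rw [len_eq_volume]
        apply tsum_len_le_volume
        · exact maxSet_pairwise_disjoint
        · intro K hK
          exact hK.1.2

end JonesAux

open JonesAux

/-- Jones splitting: a collection `B` with finite Carleson constant splits into `A`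
pairwise disjoint subcollections of Carleson constant at most `4`, where `A` is the
largest integer less than `4⟦B⟧`. -/
theorem stmt12 (B : Set DI) (hB : carlesonConst B ≠ ⊤)
    (A : ℕ) (hA1 : (A : ENNReal) < 4 * carlesonConst B)
    (hA2 : ∀ m : ℕ, (m : ENNReal) < 4 * carlesonConst B → m ≤ A) :
    ∃ P : Fin A → Set DI,
      (⋃ i, P i) = B ∧
      (Pairwise fun i j => Disjoint (P i) (P j)) ∧
      ∀ i, carlesonConst (P i) ≤ 4 := by
  classical
  rcases Set.eq_empty_or_nonempty B with rfl | ⟨I₀, hI₀⟩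
  · exfalso
    have hzero : carlesonConst (∅ : Set DI) = 0 := by
      have h0 : ∀ J : DI, carlesonSum (∅ : Set DI) J = 0 := by
        intro J
        have : IsEmpty {I : DI // I ∈ (∅ : Set DI) ∧ I.carrier ⊆ J.carrier} :=
          ⟨fun I => I.2.1⟩
        rw [carlesonSum]
        exact tsum_empty
      simp [carlesonConst, h0]
    rw [hzero] at hA1
    simp at hA1
  set C := carlesonConst B with hCdef
  have hsumle : ∀ J : DI, carlesonSum B J ≤ C * J.len := by
    intro J
    have h := le_iSup (fun J : DI => carlesonSum B J / J.len) J
    exact (ENNReal.div_le_iff (len_ne_zero J) (len_ne_top J)).1 h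
  have hC1 : 1 ≤ C := by
    have h1 : I₀.len ≤ carlesonSum B I₀ :=
      ENNReal.le_tsum (⟨I₀, hI₀, subset_rfl⟩ : {I : DI // I ∈ B ∧ I.carrier ⊆ I₀.carrier})
    have h2 : carlesonSum B I₀ / I₀.len ≤ C :=
      le_iSup (fun J : DI => carlesonSum B J / J.len) I₀
    refine le_trans ?_ h2
    rw [ENNReal.le_div_iff_mul_le (Or.inl (len_ne_zero I₀)) (Or.inl (len_ne_top I₀)), one_mul]
    exact h1
  have hA3 : 3 ≤ A := by
    apply hA2
    calc ((3:ℕ) : ENNReal) < 4 := by norm_num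
      _ = 4 * 1 := (mul_one _).symm
      _ ≤ 4 * C := mul_le_mul_right hC1 4
  have hA0 : A ≠ 0 := by omega
  have h4C : 4 * C ≤ (A : ENNReal) + 1 := by
    by_contra hcon
    push_neg at hcon
    have h := hA2 (A + 1) (by push_cast; exact hcon)
    omega
  have hC3A : C ≤ ((3 * A : ℕ) : ENNReal) := by
    calc C ≤ 4 * C := le_mul_of_one_le_left zero_le (by norm_num)
      _ ≤ (A : ENNReal) + 1 := h4C
      _ ≤ ((3 * A : ℕ) : ENNReal) := by
          have : (A : ℕ) + 1 ≤ 3 * A := by omega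
          exact_mod_cast Nat.cast_le.2 this
  have hCle : ∀ J : DI, carlesonSum B J ≤ ((3 * A : ℕ) : ENNReal) * J.len := fun J =>
    (hsumle J).trans (mul_le_mul_left hC3A _)
  refine ⟨fun i => {I | I ∈ B ∧ gen B I % A = i.1}, ?_, ?_, ?_⟩
  · ext I
    simp only [Set.mem_iUnion, Set.mem_setOf_eq]
    constructor
    · rintro ⟨i, hI, _⟩
      exact hI
    · intro hI
      exact ⟨⟨gen B I % A, Nat.mod_lt _ (Nat.pos_of_ne_zero hA0)⟩, hI, rfl⟩
  · intro i i' hne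
    rw [Set.disjoint_left]
    rintro I ⟨hIB, hIi⟩ ⟨_, hIi'⟩
    exact hne (Fin.ext (hIi ▸ hIi'))
  · intro i
    apply iSup_le
    intro J
    rw [ENNReal.div_le_iff (len_ne_zero J) (len_ne_top J)]
    exact classBound hA0 hCle i.1 J
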